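/- arXiv:1512.08414 — 5 statements merged into one kernel-verified Lean document; each statement's English description precedes it below -/
import Mathlib

section
/- For every integer n ≥ 1, the polynomial Δ_n(t) = t^4 + n·t^3 − (2n+1)·t^2 + n·t + 1 is irreducible over ℚ. -/
open Polynomial

private lemma delta_no_root (n r : ℤ) (hn : 1 ≤ n)
    (h : r^4 + n*r^3 - (2*n+1)*r^2 + n*r + 1 = 0) : False := by
  have hd : r ∣ 1 := ⟨-(r^3 + n*r^2 - (2*n+1)*r + n), by linear_combination h⟩
  rcases Int.isUnit_iff.mp (isUnit_of_dvd_one hd) with rfl | rfl <;> nlinarith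

private lemma delta_no_sq (n m : ℤ) (hn : 1 ≤ n) (h : m^2 = n^2 + 8*n + 12) : False := by
  rcases le_or_gt 0 m with hm | hm
  · rcases le_or_gt m (n+3) with h1 | h1 <;> nlinarith
  · rcases le_or_gt (-(n+3)) m with h1 | h1 <;> nlinarith

private lemma delta_rep2 (g : ℤ[X]) (hm : g.Monic) (hd : g.natDegree = 2) :
    g = X^2 + C (g.coeff 1) * X + C (g.coeff 0) := by
  ext k
  match k with
  | 0 => simp [coeff_C, coeff_one, -eq_intCast]
  | 1 => simp [coeff_X_pow, coeff_C, coeff_one, -eq_intCast]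
  | 2 => simpa [coeff_X_pow, coeff_C, coeff_one, -eq_intCast] using (hd ▸ hm.coeff_natDegree)
  | (k+3) =>
    rw [coeff_eq_zero_of_natDegree_lt (by omega : g.natDegree < k+3)]
    simp [coeff_X_pow, coeff_C, coeff_one, -eq_intCast]

private lemma delta_key1 (n : ℤ) (hn : 1 ≤ n) (g : ℤ[X]) (hg : g.Monic)
    (hd : g.natDegree = 1)
    (hdvd : g ∣ (X ^ 4 + C n * X ^ 3 - C (2*n+1) * X ^ 2 + C n * X + 1 : ℤ[X])) : False := by
  have hrep : g = X + C (g.coeff 0) := hg.eq_X_add_C hd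
  rw [hrep] at hdvd
  have : (X - C (-(g.coeff 0))) ∣ (X ^ 4 + C n * X ^ 3 - C (2*n+1) * X ^ 2 + C n * X + 1 : ℤ[X]) := by
    simpa [sub_neg_eq_add] using hdvd
  have hroot := dvd_iff_isRoot.mp this
  set r := -(g.coeff 0)
  simp only [IsRoot, eval_add, eval_sub, eval_mul, eval_pow, eval_X, eval_C, eval_one] at hroot
  exact delta_no_root n r hn (by linear_combination hroot)

private lemma delta_key2 (n : ℤ) (hn : 1 ≤ n) (g : ℤ[X]) (hg : g.Monic)
    (hd : g.natDegree = 2)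
    (hdvd : g ∣ (X ^ 4 + C n * X ^ 3 - C (2*n+1) * X ^ 2 + C n * X + 1 : ℤ[X])) : False := by
  have hPm : (X ^ 4 + C n * X ^ 3 - C (2*n+1) * X ^ 2 + C n * X + 1 : ℤ[X]).Monic := by
    monicity!
  have hPd : (X ^ 4 + C n * X ^ 3 - C (2*n+1) * X ^ 2 + C n * X + 1 : ℤ[X]).natDegree = 4 := by
    compute_degree!
  obtain ⟨f, hf⟩ := hdvd
  have hfm : f.Monic := hg.of_mul_monic_left (hf ▸ hPm)
  have hg0 : g ≠ 0 := hg.ne_zero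
  have hf0 : f ≠ 0 := hfm.ne_zero
  have hfd : f.natDegree = 2 := by
    have := natDegree_mul hg0 hf0
    rw [← hf, hPd, hd] at this
    omega
  obtain ⟨a, b, hg2⟩ : ∃ a b, g = X^2 + C a * X + C b := ⟨_, _, delta_rep2 g hg hd⟩
  obtain ⟨c, d, hf2⟩ : ∃ c d, f = X^2 + C c * X + C d := ⟨_, _, delta_rep2 f hfm hfd⟩
  rw [hg2, hf2] at hf
  have e0 := congrArg (fun q => Polynomial.eval 0 q) hf
  have e1 := congrArg (fun q => Polynomial.eval 1 q) hf
  have e2 := congrArg (fun q => Polynomial.eval (-1) q) hf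
  have e3 := congrArg (fun q => Polynomial.eval 2 q) hf
  have e4 := congrArg (fun q => Polynomial.eval (-2) q) hf
  simp only [eval_mul, eval_add, eval_sub, eval_pow, eval_X, eval_C, eval_one] at e0 e1 e2 e3 e4
  ring_nf at e0 e1 e2 e3 e4
  have E4 : b * d = 1 := by linarith
  have E3 : a * d + b * c = n := by linarith
  have E2 : b + d + a * c = -(2*n+1) := by linarith
  have E1 : a + c = n := by linarith
  rcases Int.mul_eq_one_iff_eq_one_or_neg_one.mp E4 with ⟨rfl, rfl⟩ | ⟨rfl, rfl⟩
  · exact delta_no_sq n (a - c) hn (by nlinarith)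
  · nlinarith

private lemma delta_int_irred (n : ℤ) (hn : 1 ≤ n) :
    Irreducible (X ^ 4 + C n * X ^ 3 - C (2*n+1) * X ^ 2 + C n * X + 1 : ℤ[X]) := by
  have hPm : (X ^ 4 + C n * X ^ 3 - C (2*n+1) * X ^ 2 + C n * X + 1 : ℤ[X]).Monic := by
    monicity!
  have hPd : (X ^ 4 + C n * X ^ 3 - C (2*n+1) * X ^ 2 + C n * X + 1 : ℤ[X]).natDegree = 4 := by
    compute_degree!
  set P : ℤ[X] := X ^ 4 + C n * X ^ 3 - C (2*n+1) * X ^ 2 + C n * X + 1 with hPdef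
  constructor
  · intro hu
    have := natDegree_eq_zero_of_isUnit hu
    omega
  · intro g f hgf
    by_contra hc
    push_neg at hc
    obtain ⟨hgnu, hfnu⟩ := hc
    have hg0 : g ≠ 0 := by rintro rfl; simp at hgf; exact hPm.ne_zero hgf
    have hf0 : f ≠ 0 := by rintro rfl; simp at hgf; exact hPm.ne_zero hgf
    have hlc : g.leadingCoeff * f.leadingCoeff = 1 := by
      have h1 : P.leadingCoeff = 1 := hPm
      rw [hgf, leadingCoeff_mul] at h1
      exact h1
    have hgd1 : 1 ≤ g.natDegree := by
      by_contra h
      have hg00 : g.natDegree = 0 := by omega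
      have hgc : g = C (g.coeff 0) := eq_C_of_natDegree_eq_zero hg00
      apply hgnu
      rw [hgc, isUnit_C, Int.isUnit_iff]
      have h2 : g.leadingCoeff = g.coeff 0 := by rw [leadingCoeff, hg00]
      rcases Int.mul_eq_one_iff_eq_one_or_neg_one.mp hlc with ⟨h1, _⟩ | ⟨h1, _⟩ <;>
        rw [h2] at h1 <;> simp [h1]
    have hfd1 : 1 ≤ f.natDegree := by
      by_contra h
      have hf00 : f.natDegree = 0 := by omega
      have hfc : f = C (f.coeff 0) := eq_C_of_natDegree_eq_zero hf00
      apply hfnu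
      rw [hfc, isUnit_C, Int.isUnit_iff]
      have h2 : f.leadingCoeff = f.coeff 0 := by rw [leadingCoeff, hf00]
      rcases Int.mul_eq_one_iff_eq_one_or_neg_one.mp hlc with ⟨_, h1⟩ | ⟨_, h1⟩ <;>
        rw [h2] at h1 <;> simp [h1]
    have hsum : g.natDegree + f.natDegree = 4 := by
      have := natDegree_mul hg0 hf0
      rw [← hgf, hPd] at this
      omega
    obtain ⟨G, F, hGm, hFm, hPGF, hGd, hFd⟩ :
        ∃ G F : ℤ[X], G.Monic ∧ F.Monic ∧ P = G * F ∧ G.natDegree = g.natDegree ∧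
          F.natDegree = f.natDegree := by
      rcases Int.mul_eq_one_iff_eq_one_or_neg_one.mp hlc with ⟨h1, h2⟩ | ⟨h1, h2⟩
      · exact ⟨g, f, h1, h2, hgf, rfl, rfl⟩
      · refine ⟨-g, -f, ?_, ?_, by rw [hgf]; ring, natDegree_neg g, natDegree_neg f⟩
        · show (-g).leadingCoeff = 1
          rw [leadingCoeff_neg, h1]; ring
        · show (-f).leadingCoeff = 1
          rw [leadingCoeff_neg, h2]; ring
    have hGP : G ∣ P := ⟨F, hPGF⟩
    have hFP : F ∣ P := ⟨G, by rw [hPGF]; ring⟩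
    have hcase : G.natDegree = 1 ∨ G.natDegree = 2 ∨ F.natDegree = 1 ∨ F.natDegree = 2 := by
      omega
    rcases hcase with h | h | h | h
    · exact delta_key1 n hn G hGm h hGP
    · exact delta_key2 n hn G hGm h hGP
    · exact delta_key1 n hn F hFm h hFP
    · exact delta_key2 n hn F hFm h hFP

theorem delta_irreducible (n : ℤ) (hn : 1 ≤ n) :
    Irreducible ((X ^ 4 + C (n : ℚ) * X ^ 3 - C (2 * (n : ℚ) + 1) * X ^ 2
      + C (n : ℚ) * X + 1 : Polynomial ℚ)) := by
  have hPm : (X ^ 4 + C n * X ^ 3 - C (2*n+1) * X ^ 2 + C n * X + 1 : ℤ[X]).Monic := by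
    monicity!
  have hirr := (hPm.irreducible_iff_irreducible_map_fraction_map (K := ℚ)).mp
    (delta_int_irred n hn)
  have hmap : Polynomial.map (algebraMap ℤ ℚ)
      (X ^ 4 + C n * X ^ 3 - C (2*n+1) * X ^ 2 + C n * X + 1 : ℤ[X])
      = (X ^ 4 + C (n : ℚ) * X ^ 3 - C (2 * (n : ℚ) + 1) * X ^ 2
      + C (n : ℚ) * X + 1 : Polynomial ℚ) := by
    simp only [Polynomial.map_add, Polynomial.map_sub, Polynomial.map_mul, Polynomial.map_pow,
      Polynomial.map_X, Polynomial.map_C, Polynomial.map_one, algebraMap_int_eq,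
      eq_intCast, Polynomial.map_intCast, C_eq_intCast, C_add, C_mul, C_1, map_ofNat]
    push_cast
    ring
  rwa [hmap] at hirr
end

section
/- For every integer n ≥ 1, the polynomial Δ_n(t) = t^4 + n t^3 − (2n+1) t^2 + n t + 1 has exactly two real roots, both of which are negative. -/
open Polynomial

theorem delta_two_negative_real_roots (n : ℤ) (hn : 1 ≤ n) :
    ((X ^ 4 + C (n : ℝ) * X ^ 3 - C (2 * (n : ℝ) + 1) * X ^ 2
        + C (n : ℝ) * X + 1 : Polynomial ℝ)).roots.card = 2 ∧
      ∀ x ∈ ((X ^ 4 + C (n : ℝ) * X ^ 3 - C (2 * (n : ℝ) + 1) * X ^ 2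
        + C (n : ℝ) * X + 1 : Polynomial ℝ)).roots, x < 0 := by
  have hN : (1 : ℝ) ≤ (n : ℝ) := by exact_mod_cast hn
  set N : ℝ := (n : ℝ) with hNdef
  set d : ℝ := Real.sqrt (N ^ 2 + 8 * N + 12) with hddef
  have hd2 : d ^ 2 = N ^ 2 + 8 * N + 12 := Real.sq_sqrt (by nlinarith)
  have hdnn : 0 ≤ d := Real.sqrt_nonneg _
  have hd_lt : d < N + 4 := by nlinarith
  have hd_gt : 4 < N + d := by nlinarith
  have hdN : N < d := by nlinarith
  set a : ℝ := (-N + d) / 2 with hadef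
  set b : ℝ := (-N - d) / 2 with hbdef
  have ha2 : a ^ 2 < 4 := by
    have : a = (d - N) / 2 := by ring
    nlinarith
  have hb2 : 4 < b ^ 2 := by nlinarith
  have hbneg : b < 0 := by
    have : 0 < N + d := by linarith
    simp only [hbdef]; linarith
  set e : ℝ := Real.sqrt (b ^ 2 - 4) with hedef
  have he2 : e ^ 2 = b ^ 2 - 4 := Real.sq_sqrt (by linarith)
  have henn : 0 ≤ e := Real.sqrt_nonneg _
  have he_lt : e < -b := by nlinarith
  set r1 : ℝ := (b + e) / 2 with hr1def
  set r2 : ℝ := (b - e) / 2 with hr2def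
  have hr1neg : r1 < 0 := by simp only [hr1def]; linarith
  have hr2neg : r2 < 0 := by simp only [hr2def]; linarith
  have hsum : r1 + r2 = b := by simp only [hr1def, hr2def]; ring
  have hprod : r1 * r2 = 1 := by
    have : r1 * r2 = (b ^ 2 - e ^ 2) / 4 := by simp only [hr1def, hr2def]; ring
    rw [this, he2]; ring
  have hab : a + b = -N := by simp only [hadef, hbdef]; ring
  have habp : a * b = -(2 * N + 3) := by
    have : a * b = (N ^ 2 - d ^ 2) / 4 := by simp only [hadef, hbdef]; ring
    rw [this, hd2]; ring
  -- factorization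
  have hfac : (X ^ 4 + C N * X ^ 3 - C (2 * N + 1) * X ^ 2 + C N * X + 1 : Polynomial ℝ)
      = (X ^ 2 - C a * X + 1) * ((X - C r1) * (X - C r2)) := by
    have h1 : ((X : Polynomial ℝ) - C r1) * (X - C r2)
        = X ^ 2 - C (r1 + r2) * X + C (r1 * r2) := by
      simp only [C_add, C_mul]; ring
    rw [h1, hsum, hprod]
    have h2 : ((X : Polynomial ℝ) ^ 2 - C a * X + 1) * (X ^ 2 - C b * X + C 1)
        = X ^ 4 - C (a + b) * X ^ 3 + C (a * b + 2) * X ^ 2 - C (a + b) * X + 1 := by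
      simp only [C_add, C_mul, C_1, map_ofNat]; ring
    rw [h2, hab, habp]
    simp only [map_neg, C_add, C_mul, C_1, map_ofNat]
    ring
  have hq_ne : (X ^ 2 - C a * X + 1 : Polynomial ℝ) ≠ 0 := by
    intro h
    have := congrArg (eval 0) h
    simp at this
  have hq_eval : ∀ x : ℝ, eval x (X ^ 2 - C a * X + 1 : Polynomial ℝ) ≠ 0 := by
    intro x
    simp only [eval_add, eval_sub, eval_pow, eval_mul, eval_X, eval_C, eval_one]
    nlinarith [sq_nonneg (x - a / 2), sq_nonneg x]
  have hq_roots : (X ^ 2 - C a * X + 1 : Polynomial ℝ).roots = 0 := by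
    apply Multiset.eq_zero_of_forall_notMem
    intro x hx
    exact hq_eval x ((mem_roots hq_ne).mp hx)
  have hl_ne : ((X : Polynomial ℝ) - C r1) * (X - C r2) ≠ 0 :=
    mul_ne_zero (X_sub_C_ne_zero r1) (X_sub_C_ne_zero r2)
  have hl_roots : (((X : Polynomial ℝ) - C r1) * (X - C r2)).roots = {r1, r2} := by
    rw [roots_mul hl_ne, roots_X_sub_C, roots_X_sub_C]
    rfl
  have hroots : (X ^ 4 + C N * X ^ 3 - C (2 * N + 1) * X ^ 2 + C N * X + 1
      : Polynomial ℝ).roots = {r1, r2} := by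
    rw [hfac, roots_mul (mul_ne_zero hq_ne hl_ne), hq_roots, hl_roots, zero_add]
  rw [hroots]
  constructor
  · rfl
  · intro x hx
    simp only [Multiset.insert_eq_cons, Multiset.mem_cons, Multiset.mem_singleton] at hx
    rcases hx with h | h <;> rw [h] <;> assumption
end

section
/- For every integer n ≥ 1, the polynomial Δ_n(t) = t^4 + n t^3 − (2n+1) t^2 + n t + 1 has exactly one complex root with positive imaginary part, and that root lies on the unit circle. -/
theorem delta_unique_root_upper_half_on_circle (n : ℤ) (hn : 1 ≤ n) :
    ∃ ω : ℂ,
      (ω ^ 4 + (n : ℂ) * ω ^ 3 - (2 * (n : ℂ) + 1) * ω ^ 2 + (n : ℂ) * ω + 1 = 0 ∧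
        0 < ω.im ∧ ‖ω‖ = 1) ∧
      ∀ z : ℂ,
        (z ^ 4 + (n : ℂ) * z ^ 3 - (2 * (n : ℂ) + 1) * z ^ 2 + (n : ℂ) * z + 1 = 0 ∧
          0 < z.im) → z = ω := by
  have hn1 : (1:ℝ) ≤ (n:ℝ) := by exact_mod_cast hn
  set N : ℝ := (n:ℝ) with hNdef
  have hD : (0:ℝ) ≤ N^2 + 8*N + 12 := by nlinarith
  set d : ℝ := Real.sqrt (N^2 + 8*N + 12) with hddef
  have hd2 : d^2 = N^2 + 8*N + 12 := Real.sq_sqrt hD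
  have hdnn : 0 ≤ d := Real.sqrt_nonneg _
  set s : ℝ := (-N + d)/2 with hsdef
  set s' : ℝ := (-N - d)/2 with hs'def
  have hs2 : s^2 < 4 := by
    have h1 : d < N + 4 := by nlinarith
    have h2 : N - 4 < d := by nlinarith
    nlinarith
  have hs'2 : 4 < s'^2 := by nlinarith
  have hsum : s + s' = -N := by ring
  have hprod : s * s' = -(2*N+3) := by nlinarith
  have hE : (0:ℝ) ≤ 4 - s^2 := by linarith
  set e : ℝ := Real.sqrt (4 - s^2) with hedef
  have he2 : e^2 = 4 - s^2 := Real.sq_sqrt hE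
  have hepos : 0 < e := Real.sqrt_pos.mpr (by linarith)
  have hNC : (n:ℂ) = ((N:ℝ):ℂ) := by rw [hNdef]; push_cast; ring
  have hsumC : (s:ℂ) + (s':ℂ) = -((N:ℝ):ℂ) := by exact_mod_cast congrArg (Complex.ofReal) hsum
  have hprodC : (s:ℂ) * (s':ℂ) = -(2*((N:ℝ):ℂ)+3) := by
    have := congrArg (Complex.ofReal) hprod
    push_cast at this
    exact_mod_cast hprod
  have hfac : ∀ z : ℂ, z ^ 4 + (n : ℂ) * z ^ 3 - (2 * (n : ℂ) + 1) * z ^ 2 + (n : ℂ) * z + 1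
      = (z^2 - (s:ℂ)*z + 1) * (z^2 - (s':ℂ)*z + 1) := by
    intro z
    rw [hNC]
    linear_combination (z^3+z)*hsumC - z^2*hprodC
  set ω : ℂ := ⟨s/2, e/2⟩ with hωdef
  have hωfac : ω^2 - (s:ℂ)*ω + 1 = 0 := by
    rw [Complex.ext_iff]
    constructor
    · simp [hωdef, pow_two, Complex.mul_re, Complex.mul_im]
      nlinarith
    · simp [hωdef, pow_two, Complex.mul_re, Complex.mul_im]
      ring
  refine ⟨ω, ⟨?_, ?_, ?_⟩, ?_⟩
  · rw [hfac, hωfac, zero_mul]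
  · show 0 < e/2
    linarith
  · have hns : Complex.normSq ω = 1 := by
      simp [hωdef, Complex.normSq_mk]
      nlinarith
    rw [Complex.norm_def, hns, Real.sqrt_one]
  · rintro z ⟨hz, hzim⟩
    rw [hfac] at hz
    rcases mul_eq_zero.mp hz with h | h
    · have hre := congrArg Complex.re h
      have him := congrArg Complex.im h
      simp [pow_two, Complex.mul_re, Complex.mul_im] at hre him
      have h0 : z.im * (2*z.re - s) = 0 := by linear_combination him
      have hx : z.re = s/2 := by
        rcases mul_eq_zero.mp h0 with h1 | h1
        · exact absurd h1 (ne_of_gt hzim)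
        · linarith
      rw [hx] at hre
      have hy2 : z.im^2 = (e/2)^2 := by linear_combination (-1)*hre - (1/4)*he2
      have hfct : (z.im - e/2)*(z.im + e/2) = 0 := by linear_combination hy2
      have hy : z.im = e/2 := by
        rcases mul_eq_zero.mp hfct with h1 | h1
        · linarith
        · linarith
      rw [Complex.ext_iff]
      exact ⟨hx, hy⟩
    · exfalso
      have hre := congrArg Complex.re h
      have him := congrArg Complex.im h
      simp [pow_two, Complex.mul_re, Complex.mul_im] at hre him
      have h0 : z.im * (2*z.re - s') = 0 := by linear_combination him
      have hx : z.re = s'/2 := by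
        rcases mul_eq_zero.mp h0 with h1 | h1
        · exact absurd h1 (ne_of_gt hzim)
        · linarith
      rw [hx] at hre
      nlinarith [mul_self_nonneg z.im]
end

section
/- Let G be an abelian group, A ≤ G a subgroup, g : G → ℝ subadditive, symmetric, with g(0)=0. Suppose for each n ≥ 1 there are homomorphisms ψ_n : G → ℝ vanishing on A with |ψ_n(x)| ≤ 2 g(x) for all x, and elements y_n ∈ G with ψ_n(y_n) ≥ 2N and ψ_n(y_m) = 0 for m < n, where N is a fixed positive integer. Then for every nonzero ℤ-linear combination x = Σ a_n y_n (finitely many a_n ≠ 0) and every a ∈ A, g(x − a) ≥ N. -/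
theorem genus_bound_on_span {G : Type*} [AddCommGroup G]
    (A : AddSubgroup G) (g : G → ℝ)
    (hsub : ∀ x y : G, g (x + y) ≤ g x + g y)
    (h0 : g 0 = 0) (hsymm : ∀ x : G, g (-x) = g x)
    (N : ℕ) (hN : 0 < N)
    (ψ : ℕ → G →+ ℝ) (y : ℕ → G)
    (hA : ∀ n, ∀ a ∈ A, ψ n a = 0)
    (hbound : ∀ n, ∀ x : G, |ψ n x| ≤ 2 * g x)
    (hdiag : ∀ n, (2 * N : ℝ) ≤ ψ n (y n))
    (htri : ∀ m n : ℕ, m < n → ψ n (y m) = 0) :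
    ∀ f : ℕ →₀ ℤ, f ≠ 0 → ∀ a ∈ A,
      (N : ℝ) ≤ g ((f.sum fun n c => c • y n) - a) := by
  intro f hf a ha
  have hsupp : f.support.Nonempty := Finsupp.support_nonempty_iff.2 hf
  set n := f.support.max' hsupp with hn
  have hnmem : n ∈ f.support := f.support.max'_mem hsupp
  have hfn : f n ≠ 0 := Finsupp.mem_support_iff.1 hnmem
  set x := f.sum fun m c => c • y m with hx
  have hψx : ψ n x = (f n : ℝ) * ψ n (y n) := by
    rw [hx, Finsupp.sum, map_sum]
    rw [Finset.sum_eq_single n]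
    · simp [← Int.cast_smul_eq_zsmul ℝ]
    · intro m hm hmn
      have hlt : m < n := lt_of_le_of_ne (f.support.le_max' m hm) hmn
      simp [htri m n hlt]
    · intro h; exact absurd hnmem h
  have hψa : ψ n (x - a) = ψ n x := by
    rw [map_sub, hA n a ha, sub_zero]
  have h2N : (2 * N : ℝ) ≤ |ψ n (x - a)| := by
    rw [hψa, hψx, abs_mul]
    have h1 : (1 : ℝ) ≤ |(f n : ℝ)| := by
      rw [← Int.cast_abs]
      exact_mod_cast Int.one_le_abs hfn
    have hpos : (0 : ℝ) < 2 * N := by positivity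
    have : |ψ n (y n)| = ψ n (y n) := abs_of_nonneg (le_trans hpos.le (hdiag n))
    calc (2 * N : ℝ) ≤ ψ n (y n) := hdiag n
      _ = 1 * |ψ n (y n)| := by rw [this, one_mul]
      _ ≤ |(f n : ℝ)| * |ψ n (y n)| := by
          apply mul_le_mul_of_nonneg_right h1 (abs_nonneg _)
  have := hbound n (x - a)
  linarith
end

section
/- For every integer n ≥ 1, the quartic t^4 + n t^3 − (2n+1) t^2 + n t + 1 has no factorization over ℤ into two monic quadratics of the form (t^2 + a t + 1)(t^2 + b t + 1) or (t^2 + a t − 1)(t^2 + b t − 1) with a, b ∈ ℤ. -/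
open Polynomial

theorem delta_no_quadratic_factorization (n : ℤ) (hn : 1 ≤ n) (a b : ℤ) :
    (X ^ 4 + C (n : ℤ) * X ^ 3 - C (2 * n + 1 : ℤ) * X ^ 2
        + C (n : ℤ) * X + 1 : Polynomial ℤ)
      ≠ (X ^ 2 + C a * X + 1) * (X ^ 2 + C b * X + 1) ∧
    (X ^ 4 + C (n : ℤ) * X ^ 3 - C (2 * n + 1 : ℤ) * X ^ 2
        + C (n : ℤ) * X + 1 : Polynomial ℤ)
      ≠ (X ^ 2 + C a * X - 1) * (X ^ 2 + C b * X - 1) := by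
  constructor
  · intro h
    have h1 := congrArg (Polynomial.eval (1 : ℤ)) h
    have h2 := congrArg (Polynomial.eval (-1 : ℤ)) h
    simp only [eval_add, eval_sub, eval_mul, eval_pow, eval_C, eval_X, eval_one] at h1 h2
    have hu : (a + 2) * (b + 2) = 1 := by ring_nf; ring_nf at h1; linarith
    rcases Int.mul_eq_one_iff_eq_one_or_neg_one.mp hu with ⟨ha, hb⟩ | ⟨ha, hb⟩ <;>
      nlinarith [h2]
  · intro h
    have h1 := congrArg (Polynomial.eval (1 : ℤ)) h
    have h2 := congrArg (Polynomial.eval (-1 : ℤ)) h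
    simp only [eval_add, eval_sub, eval_mul, eval_pow, eval_C, eval_X, eval_one] at h1 h2
    nlinarith [h1, h2]
end
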